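/- For every n ≥ 1, the degree-n component of log(∑_{m≥0} p_m) in (𝐒𝐣, ⋄) satisfies: ∑_{k=1}^{n} ((-1)^{k-1}/k) ∑_{(n_1,…,n_k) composition of n} p_{n_1} ⋄ p_{n_2} ⋄ ⋯ ⋄ p_{n_k} = ∑_{I ⊆ [n-1]} ((-1)^{|I|}/(|I|+1)) · D_{⊆I}^n, an identity in the free ℚ-vector space 𝐒𝐣_n with basis Sj_n. Here the inner sum is over all ordered sequences (n_1,…,n_k) of positive integers with n_1+⋯+n_k = n. -/

import Mathlib

open scoped Classical

noncomputable section

/-- Number of distinct letters of `w` smaller than `a`. -/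
def rank (w : List ℕ) (a : ℕ) : ℕ := (w.dedup.filter (fun b => b < a)).length

/-- The packing of a word over the alphabet `ℕ` (letters are 0-indexed). -/
def pack (w : List ℕ) : List ℕ := w.map (rank w)

/-- A packed word, i.e. a word equal to its own packing.  Packed words of length `n`
whose set of letters is `{0,…,k-1}` are exactly the surjections `[n] ↠ [k]`
(written with 0-indexed values). -/
def Packed (w : List ℕ) : Prop := pack w = w

/-- The type of surjections, encoded as packed words. -/
abbrev PW := {w : List ℕ // Packed w}

/-- `𝐒𝐣`, the free `ℚ`-vector space on the set of all surjections. -/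
abbrev Sj := PW →₀ ℚ

/-- All lists of length `N` with letters `< N`. -/
def candidates (N : ℕ) : Finset (List ℕ) :=
  Finset.image (fun v : Fin N → Fin N => List.ofFn (fun i => (v i : ℕ))) Finset.univ

/-- The (finite) set of surjections `h` appearing in the product `f ⋄ g`
of two surjections: the packed words `h` of length `|f| + |g|` such that
`pack` of the first `|f|` letters of `h` is `f` and `pack` of the remaining
letters is `g`. -/
def diamondSet (f g : List ℕ) : Finset PW :=
  ((candidates (f.length + g.length)).filter
    (fun w => Packed w ∧ pack (w.take f.length) = f ∧ pack (w.drop f.length) = g)).subtype Packed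

/-- The product of two basis elements of `𝐒𝐣`. -/
def diamondPW (f g : PW) : Sj := ∑ h ∈ diamondSet f.1 g.1, Finsupp.single h 1

/-- The bilinear extension `⋄` of the product of surjections to `𝐒𝐣`. -/
def diamond (F G : Sj) : Sj :=
  F.sum fun f a => G.sum fun g b => (a * b) • diamondPW f g

/-- The empty surjection from `[0] = ∅` to itself. -/
def emptyPW : PW := ⟨[], rfl⟩

/-- The unit of `𝐒𝐣`: the empty surjection. -/
def oneSj : Sj := Finsupp.single emptyPW 1

/-- Descent set (with positions written 1-indexed, as subsets of `[n-1] = {1,…,n-1}`):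
`i ∈ Desc(f)` iff `1 ≤ i ≤ n-1` and `f(i) ≥ f(i+1)`. -/
def descSet (w : List ℕ) : Finset ℕ :=
  (Finset.Icc 1 (w.length - 1)).filter (fun i => w.getD i 0 ≤ w.getD (i - 1) 0)

/-- The (finite) set of all surjections with source `[n]`. -/
def SjWords (n : ℕ) : Finset PW :=
  ((candidates n).filter Packed).subtype Packed

/-- `D^n_{⊆ I}`: the sum of all surjections from `[n]` with descent set contained in `I`. -/
def Dsub (n : ℕ) (I : Finset ℕ) : Sj :=
  ∑ f ∈ (SjWords n).filter (fun f => descSet f.1 ⊆ I), Finsupp.single f 1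

/-- `D^n_I`: the sum of all surjections from `[n]` with descent set equal to `I`. -/
def Deq (n : ℕ) (I : Finset ℕ) : Sj :=
  ∑ f ∈ (SjWords n).filter (fun f => descSet f.1 = I), Finsupp.single f 1

lemma length_filter_lt_range (n i : ℕ) :
    ((List.range n).filter (fun x => x < i)).length = min i n := by
  induction n with
  | zero => simp
  | succ n ih =>
    rw [List.range_succ, List.filter_append, List.length_append, ih]
    by_cases h : n < i
    · simp [h]; omega
    · simp [h]; omega

lemma packed_range (n : ℕ) : Packed (List.range n) := by
  unfold Packed pack rank
  rw [List.dedup_eq_self.mpr (List.nodup_range (n := n))]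
  apply List.ext_getElem (by simp)
  intro i h1 h2
  simp only [List.getElem_map, List.getElem_range, length_filter_lt_range]
  have : i < n := by simpa using h2
  omega

/-- `p_n`, the identity surjection of `[n]` (0-indexed: the word `0 1 ⋯ (n-1)`). -/
def pWord (n : ℕ) : PW := ⟨List.range n, packed_range n⟩

/-- The set `{n₁, n₁+n₂, …, n₁+⋯+n_{k-1}}` of proper partial sums of a composition. -/
def psumsSet (c : List ℕ) : Finset ℕ :=
  (Finset.range (c.length - 1)).image (fun i => (c.take (i + 1)).sum)

/-- Iterated `⋄`-product `p_{n₁} ⋄ p_{n₂} ⋄ ⋯ ⋄ p_{n_k}` of identity surjections. -/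
def diamondProd (c : List ℕ) : Sj :=
  (c.map (fun m => Finsupp.single (pWord m) (1 : ℚ))).foldr diamond oneSj

lemma rank_eq_card (w : List ℕ) (a : ℕ) :
    rank w a = (w.toFinset.filter (· < a)).card := by
  unfold rank
  rw [← List.toFinset_card_of_nodup (w.nodup_dedup.filter _), List.toFinset_filter]
  congr 1
  simp [Finset.ext_iff]

lemma rank_mono (w : List ℕ) {a b : ℕ} (hab : a ≤ b) : rank w a ≤ rank w b := by
  rw [rank_eq_card, rank_eq_card]
  apply Finset.card_le_card
  intro x hx
  simp only [Finset.mem_filter] at hx ⊢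
  exact ⟨hx.1, by omega⟩

lemma rank_strict (w : List ℕ) {a b : ℕ} (ha : a ∈ w) (hab : a < b) :
    rank w a < rank w b := by
  rw [rank_eq_card, rank_eq_card]
  apply Finset.card_lt_card
  constructor
  · intro x hx
    simp only [Finset.mem_filter] at hx ⊢
    exact ⟨hx.1, by omega⟩
  · intro hsub
    have := hsub (Finset.mem_filter.mpr ⟨List.mem_toFinset.mpr ha, by simpa⟩)
    simp at this

lemma rank_le_iff (w : List ℕ) {a b : ℕ} (ha : a ∈ w) (hb : b ∈ w) :
    rank w a ≤ rank w b ↔ a ≤ b := by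
  constructor
  · intro h
    by_contra hc
    have := rank_strict w hb (show b < a by omega)
    omega
  · exact rank_mono w

lemma rank_lt_length (w : List ℕ) {a : ℕ} (ha : a ∈ w) : rank w a < w.length := by
  rw [rank_eq_card]
  calc (w.toFinset.filter (· < a)).card < w.toFinset.card := by
        apply Finset.card_lt_card
        constructor
        · exact Finset.filter_subset _ _
        · intro hsub
          have := hsub (List.mem_toFinset.mpr ha)
          simp at this
    _ ≤ w.length := List.toFinset_card_le w

lemma pack_length (w : List ℕ) : (pack w).length = w.length := by simp [pack]

lemma pack_getElem (w : List ℕ) (i : ℕ) (h : i < w.length) :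
    (pack w)[i]'(by rw [pack_length]; exact h) = rank w w[i] := by simp [pack]

lemma mem_packed_lt {w : List ℕ} (hw : Packed w) {x : ℕ} (hx : x ∈ w) : x < w.length := by
  conv at hx => rw [← hw]
  simp only [pack, List.mem_map] at hx
  obtain ⟨a, ha, rfl⟩ := hx
  exact rank_lt_length w ha

lemma rank_pack (w : List ℕ) {a : ℕ} (ha : a ∈ w) :
    rank (pack w) (rank w a) = rank w a := by
  rw [rank_eq_card (pack w)]
  have hpt : (pack w).toFinset = w.toFinset.image (rank w) := by
    ext x
    simp [pack, List.mem_map]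
  have hinj : Set.InjOn (rank w) ↑(w.toFinset.filter (· < a)) := by
    intro x hx y hy hxy
    simp only [Finset.coe_filter, Set.mem_setOf_eq, Finset.mem_coe,
      List.mem_toFinset] at hx hy
    have h1 := rank_le_iff w hx.1 hy.1
    have h2 := rank_le_iff w hy.1 hx.1
    omega
  have hset : (pack w).toFinset.filter (· < rank w a)
      = (w.toFinset.filter (· < a)).image (rank w) := by
    ext x
    simp only [hpt, Finset.mem_filter, Finset.mem_image, List.mem_toFinset,
      decide_eq_true_eq]
    constructor
    · rintro ⟨⟨b, hb, rfl⟩, hlt⟩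
      refine ⟨b, ⟨hb, ?_⟩, rfl⟩
      by_contra hc
      have := rank_mono w (show a ≤ b by omega)
      omega
    · rintro ⟨b, ⟨hb1, hb2⟩, rfl⟩
      exact ⟨⟨b, hb1, rfl⟩, rank_strict w hb1 hb2⟩
  rw [hset, Finset.card_image_of_injOn hinj, ← rank_eq_card]

lemma packed_pack (w : List ℕ) : Packed (pack w) := by
  unfold Packed
  apply List.ext_getElem (by rw [pack_length])
  intro i h1 h2
  have hiw : i < w.length := by rw [pack_length] at h2; exact h2
  rw [pack_getElem (pack w) i h2, pack_getElem w i hiw]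
  exact rank_pack w (List.getElem_mem hiw)

lemma chain_lt_of_adj {w : List ℕ} (hadj : ∀ i, i + 1 < w.length → w.getD i 0 < w.getD (i+1) 0)
    {i j : ℕ} (hij : i < j) (hj : j < w.length) : w.getD i 0 < w.getD j 0 := by
  induction j with
  | zero => omega
  | succ j ih =>
    have hj' : j < w.length := by omega
    have := hadj j hj
    rcases Nat.lt_or_ge i j with h | h
    · exact lt_trans (ih h hj') this
    · have : i = j := by omega
      subst this
      exact hadj i hj

lemma pack_eq_range_iff (w : List ℕ) :
    pack w = List.range w.length ↔ ∀ i, i + 1 < w.length → w.getD i 0 < w.getD (i+1) 0 := by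
  constructor
  · intro h i hi
    have h1 : i < w.length := by omega
    have e1 : (pack w)[i]'(by rw [pack_length]; exact h1) = rank w w[i] := pack_getElem w i h1
    have e2 : (pack w)[i+1]'(by rw [pack_length]; exact hi) = rank w w[i+1] := pack_getElem w (i+1) hi
    simp only [h, List.getElem_range] at e1 e2
    have hle := rank_le_iff w (List.getElem_mem hi) (List.getElem_mem h1)
    rw [List.getD_eq_getElem w 0 h1, List.getD_eq_getElem w 0 hi]
    by_contra hc
    have : rank w w[i+1] ≤ rank w w[i] := hle.mpr (by omega)
    omega
  · intro hadj
    have hmono : ∀ i j (hij : i < j) (hj : j < w.length), w[i]'(lt_trans hij hj) < w[j] := by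
      intro i j hij hj
      have := chain_lt_of_adj hadj hij hj
      rwa [List.getD_eq_getElem w 0 (by omega), List.getD_eq_getElem w 0 hj] at this
    apply List.ext_getElem (by simp [pack_length])
    intro i h1 h2
    have hiw : i < w.length := by rw [pack_length] at h1; exact h1
    rw [pack_getElem w i hiw]
    simp only [List.getElem_range]
    rw [rank_eq_card]
    have hset : w.toFinset.filter (· < w[i]) = (w.take i).toFinset := by
      ext x
      simp only [Finset.mem_filter, List.mem_toFinset, List.mem_iff_getElem,
        decide_eq_true_eq]
      constructor
      · rintro ⟨⟨j, hj, rfl⟩, hlt⟩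
        have hji : j < i := by
          by_contra hc
          rcases Nat.eq_or_lt_of_le (Nat.le_of_not_lt hc) with h | h
          · subst h; omega
          · have := hmono i j h hj
            omega
        refine ⟨j, by simp [List.length_take]; omega, ?_⟩
        simp [List.getElem_take]
      · rintro ⟨j, hj, rfl⟩
        have hjlen : j < i := by simp [List.length_take] at hj; omega
        have hjw : j < w.length := by omega
        rw [List.getElem_take]
        exact ⟨⟨j, hjw, rfl⟩, hmono j i hjlen hiw⟩
    rw [hset]
    rw [List.toFinset_card_of_nodup, List.length_take]
    · omega
    · apply List.Nodup.sublist (List.take_sublist i w)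
      apply List.nodup_iff_injective_getElem.mpr ?_
      intro ⟨a, hja⟩ ⟨b, hjb⟩ hab
      simp only at hab
      rcases Nat.lt_trichotomy a b with h | h | h
      · have := hmono a b h hjb; omega
      · exact Fin.ext h
      · have := hmono b a h hja; omega

lemma mem_descSet (w : List ℕ) (i : ℕ) :
    i ∈ descSet w ↔ 1 ≤ i ∧ i ≤ w.length - 1 ∧ w.getD i 0 ≤ w.getD (i-1) 0 := by
  simp [descSet, Finset.mem_filter, Finset.mem_Icc, and_assoc]

lemma descSet_pack (w : List ℕ) : descSet (pack w) = descSet w := by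
  ext i
  rw [mem_descSet, mem_descSet, pack_length]
  constructor <;> rintro ⟨h1, h2, h3⟩ <;> refine ⟨h1, h2, ?_⟩ <;>
  · have hi : i < w.length := by omega
    have hi1 : i - 1 < w.length := by omega
    have e1 : (pack w).getD i 0 = rank w w[i] := by
      rw [List.getD_eq_getElem _ 0 (by rw [pack_length]; exact hi)]
      exact pack_getElem w i hi
    have e2 : (pack w).getD (i-1) 0 = rank w w[i-1] := by
      rw [List.getD_eq_getElem _ 0 (by rw [pack_length]; exact hi1)]
      exact pack_getElem w (i-1) hi1
    have hle := rank_le_iff w (List.getElem_mem hi) (List.getElem_mem hi1)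
    rw [List.getD_eq_getElem w 0 hi, List.getD_eq_getElem w 0 hi1] at *
    first
    | (rw [e1, e2] at h3; exact hle.mp h3)
    | (rw [e1, e2]; exact hle.mpr h3)

lemma mem_candidates (w : List ℕ) (N : ℕ) :
    w ∈ candidates N ↔ w.length = N ∧ ∀ x ∈ w, x < N := by
  unfold candidates
  simp only [Finset.mem_image, Finset.mem_univ, true_and]
  constructor
  · rintro ⟨v, rfl⟩
    refine ⟨by simp, ?_⟩
    intro x hx
    simp only [List.mem_ofFn] at hx
    obtain ⟨i, rfl⟩ := hx
    exact (v i).isLt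
  · rintro ⟨rfl, hlt⟩
    refine ⟨fun i => ⟨w[i], hlt _ (List.getElem_mem i.isLt)⟩, ?_⟩
    apply List.ext_getElem (by simp)
    intro i h1 h2
    simp

lemma mem_SjWords (g : PW) (n : ℕ) : g ∈ SjWords n ↔ g.1.length = n := by
  unfold SjWords
  rw [Finset.mem_subtype, Finset.mem_filter, mem_candidates]
  constructor
  · rintro ⟨⟨h, _⟩, _⟩; exact h
  · intro h
    exact ⟨⟨h, fun x hx => h ▸ mem_packed_lt g.2 hx⟩, g.2⟩

lemma mem_diamondSet_iff (f : List ℕ) (hf : Packed f) (g : List ℕ) (hg : Packed g) (h : PW) :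
    h ∈ diamondSet f g ↔ h.1.length = f.length + g.length ∧
      pack (h.1.take f.length) = f ∧ pack (h.1.drop f.length) = g := by
  unfold diamondSet
  rw [Finset.mem_subtype, Finset.mem_filter, mem_candidates]
  constructor
  · rintro ⟨⟨h1, _⟩, _, h3, h4⟩; exact ⟨h1, h3, h4⟩
  · rintro ⟨h1, h3, h4⟩
    exact ⟨⟨h1, fun x hx => h1 ▸ mem_packed_lt h.2 hx⟩, h.2, h3, h4⟩

lemma key_iff (w : List ℕ) (m n : ℕ) (hw : w.length = m + n) (I : Finset ℕ) :
    (pack (w.take m) = List.range m ∧ descSet (w.drop m) ⊆ I) ↔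
      descSet w ⊆ insert m (I.image (· + m)) := by
  have hlt : (w.take m).length = m := by rw [List.length_take]; omega
  have hld : (w.drop m).length = n := by rw [List.length_drop]; omega
  have htake : ∀ i (hi : i < m), (w.take m).getD i 0 = w.getD i 0 := by
    intro i hi
    rw [List.getD_eq_getElem _ 0 (by omega), List.getD_eq_getElem _ 0 (by omega),
      List.getElem_take]
  have hdrop : ∀ j (hj : j < n), (w.drop m).getD j 0 = w.getD (m + j) 0 := by
    intro j hj
    rw [List.getD_eq_getElem _ 0 (by omega), List.getD_eq_getElem _ 0 (by omega),
      List.getElem_drop]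
  rw [show List.range m = List.range (w.take m).length by rw [hlt], pack_eq_range_iff]
  constructor
  · rintro ⟨hinc, hdesc⟩ i hi
    rw [mem_descSet] at hi
    obtain ⟨h1, h2, h3⟩ := hi
    rcases Nat.lt_trichotomy i m with h | h | h
    · exfalso
      have hstep := hinc (i - 1) (by rw [hlt]; omega)
      rw [show i - 1 + 1 = i by omega, htake (i-1) (by omega), htake i (by omega)] at hstep
      omega
    · subst h; exact Finset.mem_insert_self _ _
    · apply Finset.mem_insert_of_mem
      have hj : i - m ∈ descSet (w.drop m) := by
        rw [mem_descSet]
        refine ⟨by omega, by omega, ?_⟩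
        rw [hdrop (i - m) (by omega), hdrop (i - m - 1) (by omega),
          show m + (i - m) = i by omega, show m + (i - m - 1) = i - 1 by omega]
        exact h3
      exact Finset.mem_image.mpr ⟨i - m, hdesc hj, by omega⟩
  · intro hsub
    constructor
    · intro i hi
      rw [hlt] at hi
      rw [htake i (by omega), htake (i+1) (by omega)]
      by_contra hc
      have : i + 1 ∈ descSet w := by
        rw [mem_descSet]
        exact ⟨by omega, by omega, by simpa using Nat.le_of_not_lt hc⟩
      have := hsub this
      rw [Finset.mem_insert, Finset.mem_image] at this
      rcases this with h | ⟨j, _, hj⟩ <;> omega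
    · intro j hj
      rw [mem_descSet] at hj
      obtain ⟨h1, h2, h3⟩ := hj
      rw [hld] at h2
      rw [hdrop j (by omega), hdrop (j-1) (by omega),
        show m + (j - 1) = m + j - 1 by omega] at h3
      have : m + j ∈ descSet w := by
        rw [mem_descSet]
        exact ⟨by omega, by omega, h3⟩
      have := hsub this
      rw [Finset.mem_insert, Finset.mem_image] at this
      rcases this with h | ⟨j', hj', hje⟩
      · omega
      · have : j' = j := by omega
        subst this; exact hj'

lemma diamond_single_sum (f : PW) (S : Finset PW) :
    diamond (Finsupp.single f 1) (∑ g ∈ S, Finsupp.single g (1 : ℚ)) =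
      ∑ g ∈ S, diamondPW f g := by
  unfold diamond
  rw [Finsupp.sum_single_index (by simp)]
  rw [← Finsupp.sum_finset_sum_index (by simp) (by intro a b₁ b₂; simp [mul_add, add_smul])]
  apply Finset.sum_congr rfl
  intro g _
  rw [Finsupp.sum_single_index (by simp)]
  simp

lemma Dsub_eq_sum (n : ℕ) (I : Finset ℕ) :
    Dsub n I = ∑ f ∈ (SjWords n).filter (fun f => descSet f.1 ⊆ I), Finsupp.single f 1 := rfl

lemma diamond_pWord_Dsub (m n : ℕ) (I : Finset ℕ) :
    diamond (Finsupp.single (pWord m) 1) (Dsub n I) =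
      Dsub (m + n) (insert m (I.image (· + m))) := by
  rw [Dsub_eq_sum, diamond_single_sum]
  unfold diamondPW
  set S := (SjWords n).filter (fun f => descSet f.1 ⊆ I) with hS
  set J := insert m (I.image (· + m)) with hJ
  set T := (SjWords (m+n)).filter (fun h => descSet h.1 ⊆ J) with hT
  have hmem : ∀ g ∈ S, ∀ h : PW, h ∈ diamondSet (pWord m).1 g.1 ↔
      (h ∈ T ∧ pack (h.1.drop m) = g.1) := by
    intro g hg h
    rw [hS, Finset.mem_filter, mem_SjWords] at hg
    obtain ⟨hglen, hgdesc⟩ := hg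
    rw [mem_diamondSet_iff _ (pWord m).2 _ g.2]
    simp only [pWord, List.length_range, hglen]
    constructor
    · rintro ⟨h1, h2, h3⟩
      refine ⟨?_, h3⟩
      rw [hT, Finset.mem_filter, mem_SjWords]
      refine ⟨h1, ?_⟩
      rw [← key_iff h.1 m n h1 I]
      refine ⟨h2, ?_⟩
      rw [← descSet_pack, h3]
      exact hgdesc
    · rintro ⟨h1, h3⟩
      rw [hT, Finset.mem_filter, mem_SjWords] at h1
      obtain ⟨hlen, hdesc⟩ := h1
      rw [← key_iff h.1 m n hlen I] at hdesc
      exact ⟨hlen, hdesc.1, h3⟩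
  have hdisj : (↑S : Set PW).PairwiseDisjoint (fun g => diamondSet (pWord m).1 g.1) := by
    intro g1 hg1 g2 hg2 hne
    apply Finset.disjoint_left.mpr
    intro h h1 h2
    rw [hmem g1 hg1 h] at h1
    rw [hmem g2 hg2 h] at h2
    exact hne (Subtype.ext (h1.2 ▸ h2.2))
  have hTB : T = S.biUnion (fun g => diamondSet (pWord m).1 g.1) := by
    ext h
    rw [Finset.mem_biUnion]
    constructor
    · intro hh
      have hg : (⟨pack (h.1.drop m), packed_pack _⟩ : PW) ∈ S := by
        rw [hS, Finset.mem_filter, mem_SjWords]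
        rw [hT, Finset.mem_filter, mem_SjWords] at hh
        obtain ⟨hlen, hdesc⟩ := hh
        rw [← key_iff h.1 m n hlen I] at hdesc
        constructor
        · simp only [pack_length, List.length_drop, hlen]; omega
        · rw [descSet_pack]; exact hdesc.2
      refine ⟨_, hg, ?_⟩
      rw [hmem _ hg h]
      exact ⟨hh, rfl⟩
    · rintro ⟨g, hg, hh⟩
      exact ((hmem g hg h).mp hh).1
  calc ∑ g ∈ S, diamondPW (pWord m) g
      = ∑ h ∈ T, Finsupp.single h (1 : ℚ) := by
        unfold diamondPW
        rw [hTB, Finset.sum_biUnion hdisj]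
    _ = Dsub (m + n) J := by rw [Dsub_eq_sum, hT]

lemma psumsSet_nil : psumsSet [] = ∅ := rfl

lemma psumsSet_singleton (a : ℕ) : psumsSet [a] = ∅ := rfl

lemma psumsSet_cons (m : ℕ) (c : List ℕ) (hc : c ≠ []) :
    psumsSet (m :: c) = insert m ((psumsSet c).image (· + m)) := by
  have hlen : 1 ≤ c.length := List.length_pos_iff.mpr hc
  ext a
  simp only [psumsSet, Finset.mem_image, Finset.mem_range, Finset.mem_insert,
    List.length_cons]
  constructor
  · rintro ⟨i, hi, rfl⟩
    rw [List.take_succ_cons, List.sum_cons]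
    rcases Nat.eq_zero_or_pos i with rfl | hpos
    · left; simp
    · right
      refine ⟨(c.take i).sum, ⟨i - 1, by omega, by rw [show i - 1 + 1 = i by omega]⟩, by omega⟩
  · rintro (rfl | ⟨b, ⟨j, hj, rfl⟩, rfl⟩)
    · exact ⟨0, by omega, by simp⟩
    · exact ⟨j + 1, by omega, by rw [List.take_succ_cons, List.sum_cons]; omega⟩

lemma psumsSet_concat (l : List ℕ) (a : ℕ) (hl : l ≠ []) :
    psumsSet (l ++ [a]) = insert l.sum (psumsSet l) := by
  have hlen : 1 ≤ l.length := List.length_pos_iff.mpr hl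
  have hlen2 : (l ++ [a]).length - 1 = l.length := by simp
  unfold psumsSet
  rw [hlen2, show l.length = (l.length - 1) + 1 by omega, Finset.range_add_one,
    Finset.image_insert]
  congr 1
  · rw [show l.length - 1 + 1 = l.length by omega,
      List.take_append_of_le_length (le_refl _), List.take_length]
  · apply Finset.image_congr
    intro i hi
    simp only [Finset.coe_range, Set.mem_Iio] at hi
    show (List.take (i+1) (l ++ [a])).sum = (List.take (i+1) l).sum
    rw [List.take_append_of_le_length (by omega)]

lemma psums_bounds {l : List ℕ} (hpos : ∀ x ∈ l, 0 < x) {x : ℕ} (hx : x ∈ psumsSet l) :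
    1 ≤ x ∧ x < l.sum := by
  simp only [psumsSet, Finset.mem_image, Finset.mem_range] at hx
  obtain ⟨i, hi, rfl⟩ := hx
  have hlen : i + 1 < l.length := by omega
  constructor
  · have h0 : l[0] ∈ l.take (i+1) := by
      rw [List.mem_iff_getElem]
      exact ⟨0, by simp [List.length_take]; omega, by rw [List.getElem_take]⟩
    have := hpos l[0] (List.getElem_mem (by omega))
    calc 1 ≤ l[0] := this
      _ ≤ (l.take (i+1)).sum := List.single_le_sum (fun _ _ => Nat.zero_le _) _ h0
  · conv_rhs => rw [← List.take_append_drop (i+1) l]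
    rw [List.sum_append]
    have hd : l.drop (i+1) ≠ [] := by
      rw [← List.length_pos_iff, List.length_drop]
      omega
    have : 0 < (l.drop (i+1)).sum := by
      rcases List.exists_mem_of_ne_nil _ hd with ⟨y, hy⟩
      have hyl : y ∈ l := List.mem_of_mem_drop hy
      calc 0 < y := hpos y hyl
        _ ≤ (l.drop (i+1)).sum := List.single_le_sum (fun _ _ => Nat.zero_le _) _ hy
    omega

lemma psums_card {l : List ℕ} (hpos : ∀ x ∈ l, 0 < x) :
    (psumsSet l).card = l.length - 1 := by
  induction l using List.reverseRecOn with
  | nil => simp [psumsSet_nil]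
  | append_singleton l a ih =>
    rcases eq_or_ne l [] with rfl | hl
    · simp [psumsSet_singleton]
    · have hpos' : ∀ x ∈ l, 0 < x := fun x hx => hpos x (by simp [hx])
      rw [psumsSet_concat l a hl, Finset.card_insert_of_notMem, ih hpos']
      · have := List.length_pos_iff.mpr hl
        simp only [List.length_append, List.length_singleton]
        omega
      · intro hmem
        have := (psums_bounds hpos' hmem).2
        omega

lemma descSet_subset_Icc (w : List ℕ) : descSet w ⊆ Finset.Icc 1 (w.length - 1) :=
  Finset.filter_subset _ _

lemma Dsub_congr (N : ℕ) (J₁ J₂ : Finset ℕ)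
    (h : ∀ i, 1 ≤ i → i ≤ N - 1 → (i ∈ J₁ ↔ i ∈ J₂)) : Dsub N J₁ = Dsub N J₂ := by
  rw [Dsub_eq_sum, Dsub_eq_sum]
  apply Finset.sum_congr _ (fun _ _ => rfl)
  apply Finset.filter_congr
  intro f hf
  rw [mem_SjWords] at hf
  constructor <;> intro hsub i hi <;>
  · have hd := (mem_descSet f.1 i).mp hi
    have := hsub hi
    first
    | exact (h i hd.1 (hf ▸ hd.2.1)).mp this
    | exact (h i hd.1 (hf ▸ hd.2.1)).mpr this

lemma SjWords_zero : SjWords 0 = {emptyPW} := by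
  ext f
  rw [mem_SjWords]
  simp only [Finset.mem_singleton]
  constructor
  · intro h
    apply Subtype.ext
    exact List.length_eq_zero_iff.mp h
  · rintro rfl
    rfl

lemma Dsub_zero : Dsub 0 ∅ = oneSj := by
  rw [Dsub_eq_sum, SjWords_zero, Finset.filter_singleton, if_pos]
  · rw [Finset.sum_singleton]; rfl
  · show descSet emptyPW.1 ⊆ ∅
    simp [descSet, emptyPW]

lemma diamondProd_eq_Dsub (c : List ℕ) (hpos : ∀ x ∈ c, 0 < x) :
    diamondProd c = Dsub c.sum (psumsSet c) := by
  induction c with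
  | nil =>
    simp only [diamondProd, List.map_nil, List.foldr_nil, List.sum_nil, psumsSet_nil]
    exact Dsub_zero.symm
  | cons m c ih =>
    have hm : 0 < m := hpos m (by simp)
    have hpos' : ∀ x ∈ c, 0 < x := fun x hx => hpos x (by simp [hx])
    have hstep : diamondProd (m :: c) = diamond (Finsupp.single (pWord m) 1) (diamondProd c) := rfl
    rw [hstep, ih hpos', diamond_pWord_Dsub, List.sum_cons]
    rcases eq_or_ne c [] with rfl | hc
    · simp only [List.sum_nil, psumsSet_nil, psumsSet_singleton, Finset.image_empty,
        Nat.add_zero]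
      apply Dsub_congr
      intro i h1 h2
      simp only [Finset.mem_insert, Finset.notMem_empty, iff_false]
      rintro (rfl | h)
      · omega
      · exact h
    · rw [psumsSet_cons m c hc]

lemma sum_pos_ne_nil {l : List ℕ} (hpos : ∀ x ∈ l, 0 < x) (h : l.sum ≠ 0) : l ≠ [] := by
  rintro rfl; simp at h

lemma eq_nil_of_sum_zero {l : List ℕ} (hpos : ∀ x ∈ l, 0 < x) (h : l.sum = 0) : l = [] := by
  cases l with
  | nil => rfl
  | cons x r =>
    exfalso
    have := hpos x (by simp)
    rw [List.sum_cons] at h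
    omega

lemma psums_inj {l₁ l₂ : List ℕ} (h₁ : ∀ x ∈ l₁, 0 < x) (h₂ : ∀ x ∈ l₂, 0 < x)
    (hs : l₁.sum = l₂.sum) (hp : psumsSet l₁ = psumsSet l₂) : l₁ = l₂ := by
  induction l₁ using List.reverseRecOn generalizing l₂ with
  | nil =>
    exact (eq_nil_of_sum_zero h₂ (by rw [← hs]; simp)).symm
  | append_singleton l a ih =>
    have ha : 0 < a := h₁ a (by simp)
    have hl1pos : ∀ x ∈ l, 0 < x := fun x hx => h₁ x (by simp [hx])
    have hs1 : (l ++ [a]).sum = l.sum + a := by simp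
    rcases List.eq_nil_or_concat l₂ with rfl | ⟨l₂', b, rfl⟩
    case _ => exact absurd hs (by rw [hs1]; simp; omega)
    simp only [List.concat_eq_append] at h₂ hs hp ⊢
    have hb : 0 < b := h₂ b (by simp)
    have hl2pos : ∀ x ∈ l₂', 0 < x := fun x hx => h₂ x (by simp [hx])
    have hs2 : (l₂' ++ [b]).sum = l₂'.sum + b := by simp
    rcases eq_or_ne l [] with rfl | hl
    · -- psumsSet l₂ must be empty
      rcases eq_or_ne l₂' [] with rfl | hl2
      · have hab : a = b := by simp at hs; omega
        rw [hab]
      · exfalso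
        rw [List.nil_append, psumsSet_singleton, psumsSet_concat _ _ hl2] at hp
        exact absurd hp.symm (Finset.insert_ne_empty _ _)
    rcases eq_or_ne l₂' [] with rfl | hl2
    · exfalso
      rw [psumsSet_concat _ _ hl, List.nil_append, psumsSet_singleton] at hp
      exact absurd hp (Finset.insert_ne_empty _ _)
    rw [psumsSet_concat _ _ hl, psumsSet_concat _ _ hl2] at hp
    have hbnd1 : ∀ x ∈ psumsSet l, 1 ≤ x ∧ x < l.sum := fun x hx => psums_bounds hl1pos hx
    have hbnd2 : ∀ x ∈ psumsSet l₂', 1 ≤ x ∧ x < l₂'.sum := fun x hx => psums_bounds hl2pos hx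
    have hmax : l.sum = l₂'.sum := by
      have h1 : l.sum ∈ insert l₂'.sum (psumsSet l₂') := by
        rw [← hp]; exact Finset.mem_insert_self _ _
      have h2 : l₂'.sum ∈ insert l.sum (psumsSet l) := by
        rw [hp]; exact Finset.mem_insert_self _ _
      rw [Finset.mem_insert] at h1 h2
      rcases h1 with h1 | h1
      · exact h1
      · rcases h2 with h2 | h2
        · exact h2.symm
        · have := (hbnd1 _ h2).2
          have := (hbnd2 _ h1).2
          omega
    have hps : psumsSet l = psumsSet l₂' := by
      ext x
      constructor
      · intro hx
        have hlt := (hbnd1 _ hx).2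
        have : x ∈ insert l₂'.sum (psumsSet l₂') := by
          rw [← hp]; exact Finset.mem_insert_of_mem hx
        rw [Finset.mem_insert] at this
        rcases this with rfl | h
        · omega
        · exact h
      · intro hx
        have hlt := (hbnd2 _ hx).2
        have : x ∈ insert l.sum (psumsSet l) := by
          rw [hp]; exact Finset.mem_insert_of_mem hx
        rw [Finset.mem_insert] at this
        rcases this with rfl | h
        · omega
        · exact h
    have hleq : l = l₂' := ih hl1pos hl2pos hmax hps
    subst hleq
    have : a = b := by
      rw [hs1, hs2] at hs
      omega
    rw [this]

lemma exists_comp (I : Finset ℕ) :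
    ∀ N : ℕ, 1 ≤ N → (∀ x ∈ I, 1 ≤ x ∧ x ≤ N - 1) →
      ∃ l : List ℕ, (∀ x ∈ l, 0 < x) ∧ l.sum = N ∧ l.length = I.card + 1 ∧ psumsSet l = I := by
  induction I using Finset.strongInduction with
  | _ I ih =>
    intro N hN hb
    rcases I.eq_empty_or_nonempty with rfl | hne
    · exact ⟨[N], by simp; omega, by simp, by simp, psumsSet_singleton N⟩
    · set M := I.max' hne with hM
      have hMI : M ∈ I := I.max'_mem hne
      have hMb := hb M hMI
      have hss : I.erase M ⊂ I := Finset.erase_ssubset hMI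
      have hb' : ∀ x ∈ I.erase M, 1 ≤ x ∧ x ≤ M - 1 := by
        intro x hx
        rw [Finset.mem_erase] at hx
        have hle := I.le_max' x hx.2
        exact ⟨(hb x hx.2).1, by omega⟩
      obtain ⟨l', hpos', hsum', hlen', hps'⟩ := ih _ hss M hMb.1 hb'
      have hl'ne : l' ≠ [] := by
        intro h
        rw [h] at hlen'
        simp at hlen'
      refine ⟨l' ++ [N - M], ?_, ?_, ?_, ?_⟩
      · intro x hx
        rw [List.mem_append] at hx
        rcases hx with h | h
        · exact hpos' x h
        · simp only [List.mem_singleton] at h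
          omega
      · rw [List.sum_append, hsum']
        simp only [List.sum_cons, List.sum_nil]
        omega
      · rw [List.length_append, hlen', Finset.card_erase_of_mem hMI]
        have := Finset.card_pos.mpr hne
        simp only [List.length_singleton]
        omega
      · rw [psumsSet_concat _ _ hl'ne, hsum', hps', Finset.insert_erase hMI]


/-- For every `n ≥ 1`, the degree-`n` component of `log (∑_{m≥0} p_m)`
in `(𝐒𝐣, ⋄)`, i.e. `∑_{k=1}^n ((-1)^{k-1}/k) ∑_{(n₁,…,n_k) ⊨ n} p_{n₁} ⋄ ⋯ ⋄ p_{n_k}`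
(the inner sum ranging over all compositions of `n` into `k` positive parts), equals
`∑_{I ⊆ [n-1]} ((-1)^{|I|}/(|I|+1)) · D^n_{⊆ I}`. -/
theorem log_component_eq_sum_Dsub (n : ℕ) (hn : 1 ≤ n) :
    ∑ k ∈ Finset.Icc 1 n, ((-1 : ℚ) ^ (k - 1) / (k : ℚ)) •
        ∑ c ∈ (Finset.Nat.antidiagonalTuple k n).filter (fun c => ∀ i, 0 < c i),
          diamondProd (List.ofFn c)
      = ∑ I ∈ (Finset.Icc 1 (n - 1)).powerset,
          ((-1 : ℚ) ^ I.card / ((I.card : ℚ) + 1)) • Dsub n I := by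
  have hmaps : ∀ I ∈ (Finset.Icc 1 (n - 1)).powerset, I.card + 1 ∈ Finset.Icc 1 n := by
    intro I hI
    rw [Finset.mem_powerset] at hI
    have := Finset.card_le_card hI
    rw [Nat.card_Icc] at this
    rw [Finset.mem_Icc]
    omega
  rw [← Finset.sum_fiberwise_of_maps_to hmaps
    (fun I => ((-1 : ℚ) ^ I.card / ((I.card : ℚ) + 1)) • Dsub n I)]
  apply Finset.sum_congr rfl
  intro k hk
  rw [Finset.mem_Icc] at hk
  rw [Finset.smul_sum]
  apply Finset.sum_bij (i := fun c _ => psumsSet (List.ofFn c))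
  · -- maps into target
    intro c hc
    rw [Finset.mem_filter] at hc ⊢
    obtain ⟨hc1, hc2⟩ := hc
    have hlen : (List.ofFn c).length = k := List.length_ofFn
    have hsum : (List.ofFn c).sum = n := by
      rw [List.sum_ofFn]; exact Finset.Nat.mem_antidiagonalTuple.mp hc1
    have hposl : ∀ x ∈ List.ofFn c, 0 < x := by
      intro x hx
      rw [List.mem_ofFn] at hx
      obtain ⟨i, rfl⟩ := hx
      exact hc2 i
    constructor
    · rw [Finset.mem_powerset]
      intro x hx
      have := psums_bounds hposl hx
      rw [Finset.mem_Icc]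
      omega
    · rw [psums_card hposl, hlen]
      omega
  · -- injective
    intro c₁ hc₁ c₂ hc₂ heq
    rw [Finset.mem_filter] at hc₁ hc₂
    have hs1 : (List.ofFn c₁).sum = n := by
      rw [List.sum_ofFn]; exact Finset.Nat.mem_antidiagonalTuple.mp hc₁.1
    have hs2 : (List.ofFn c₂).sum = n := by
      rw [List.sum_ofFn]; exact Finset.Nat.mem_antidiagonalTuple.mp hc₂.1
    have hp1 : ∀ x ∈ List.ofFn c₁, 0 < x := by
      intro x hx; rw [List.mem_ofFn] at hx; obtain ⟨i, rfl⟩ := hx; exact hc₁.2 i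
    have hp2 : ∀ x ∈ List.ofFn c₂, 0 < x := by
      intro x hx; rw [List.mem_ofFn] at hx; obtain ⟨i, rfl⟩ := hx; exact hc₂.2 i
    exact List.ofFn_injective (psums_inj hp1 hp2 (hs1.trans hs2.symm) heq)
  · -- surjective
    intro I hI
    rw [Finset.mem_filter, Finset.mem_powerset] at hI
    obtain ⟨hsub, hcard⟩ := hI
    have hb : ∀ x ∈ I, 1 ≤ x ∧ x ≤ n - 1 := by
      intro x hx
      have := hsub hx
      rw [Finset.mem_Icc] at this
      exact this
    obtain ⟨l, hposl, hsum, hlen, hps⟩ := exists_comp I n hn hb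
    have hlk : l.length = k := by omega
    refine ⟨fun i => l.getD i 0, ?_, ?_⟩
    · rw [Finset.mem_filter]
      have hofn : List.ofFn (fun i : Fin k => l.getD i 0) = l := by
        apply List.ext_getElem (by simp [hlk])
        intro i h1 h2
        simp only [List.getElem_ofFn]
        exact List.getD_eq_getElem l 0 h2
      constructor
      · rw [Finset.Nat.mem_antidiagonalTuple, ← List.sum_ofFn, hofn]
        exact hsum
      · intro i
        have hi : (i : ℕ) < l.length := by omega
        show 0 < l.getD (↑i) 0
        rw [List.getD_eq_getElem l 0 hi]
        exact hposl _ (List.getElem_mem hi)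
    · have hofn : List.ofFn (fun i : Fin k => l.getD i 0) = l := by
        apply List.ext_getElem (by simp [hlk])
        intro i h1 h2
        simp only [List.getElem_ofFn]
        exact List.getD_eq_getElem l 0 h2
      rw [hofn, hps]
  · -- values agree
    intro c hc
    rw [Finset.mem_filter] at hc
    obtain ⟨hc1, hc2⟩ := hc
    have hlen : (List.ofFn c).length = k := List.length_ofFn
    have hsum : (List.ofFn c).sum = n := by
      rw [List.sum_ofFn]; exact Finset.Nat.mem_antidiagonalTuple.mp hc1
    have hposl : ∀ x ∈ List.ofFn c, 0 < x := by
      intro x hx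
      rw [List.mem_ofFn] at hx
      obtain ⟨i, rfl⟩ := hx
      exact hc2 i
    rw [diamondProd_eq_Dsub _ hposl, hsum]
    congr 1
    rw [psums_card hposl, hlen]
    congr 1
    have h1 : ((k - 1 : ℕ) : ℚ) + 1 = ((k - 1 + 1 : ℕ) : ℚ) := by push_cast; ring
    rw [h1, Nat.sub_add_cancel hk.1]

end
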